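/- Let Φ be a d×d real matrix with nonnegative entries whose spectral radius is strictly smaller than 1. Then there exist a vector κ ∈ ℝ^d with all coordinates strictly positive and a constant ρ ∈ [0,1) such that, componentwise, Φᵀ κ ≤ ρ·κ. -/

import Mathlib

open Matrix Filter
open scoped ENNReal NNReal

attribute [local instance] Matrix.frobeniusSeminormedAddCommGroup
  Matrix.frobeniusNormedAddCommGroup Matrix.frobeniusNormedSpace
  Matrix.frobeniusNormedRing Matrix.frobeniusNormedAlgebra

lemma entry_le_frob (d : ℕ) (A : Matrix (Fin d) (Fin d) ℂ) (i j : Fin d) : ‖A i j‖ ≤ ‖A‖ := by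
  rw [Matrix.frobenius_norm_def]
  have h : ‖A i j‖ = (‖A i j‖ ^ (2:ℝ)) ^ (1/2:ℝ) := by
    rw [← Real.rpow_mul (norm_nonneg _)]; norm_num
  rw [h]
  apply Real.rpow_le_rpow (Real.rpow_nonneg (norm_nonneg _) _) _ (by norm_num)
  calc ‖A i j‖ ^ (2:ℝ) ≤ ∑ j', ‖A i j'‖ ^ (2:ℝ) :=
        Finset.single_le_sum (fun k _ => Real.rpow_nonneg (norm_nonneg _) _) (Finset.mem_univ j)
    _ ≤ ∑ i', ∑ j', ‖A i' j'‖ ^ (2:ℝ) :=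
        Finset.single_le_sum (fun k _ => Finset.sum_nonneg fun l _ => Real.rpow_nonneg (norm_nonneg _) _) (Finset.mem_univ i)

theorem stmt13 (d : ℕ) (Φ : Matrix (Fin d) (Fin d) ℝ)
    (hΦpos : ∀ i j, 0 ≤ Φ i j)
    (hΦspec : spectralRadius ℂ (Φ.map (Complex.ofReal)) < 1) :
    ∃ (κ : Fin d → ℝ) (ρ : ℝ), (∀ i, 0 < κ i) ∧ 0 ≤ ρ ∧ ρ < 1 ∧
      ∀ i, Φᵀ.mulVec κ i ≤ ρ * κ i := by
  set A : Matrix (Fin d) (Fin d) ℂ := Φ.map (Complex.ofReal) with hA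
  set B : Matrix (Fin d) (Fin d) ℝ := Φᵀ with hBdef
  have hBpos : ∀ i j, 0 ≤ B i j := fun i j => hΦpos j i
  -- entries of powers of B are nonneg
  have hBn : ∀ n : ℕ, ∀ i j, 0 ≤ (B ^ n) i j := by
    intro n
    induction n with
    | zero => intro i j; rw [pow_zero, Matrix.one_apply]; split <;> norm_num
    | succ n ih =>
      intro i j
      rw [pow_succ, Matrix.mul_apply]
      exact Finset.sum_nonneg fun k _ => mul_nonneg (ih i k) (hBpos k j)
  -- A^n is the complexification of Φ^n
  have hmap : ∀ n : ℕ, A ^ n = (Φ ^ n).map (Complex.ofReal) := by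
    intro n
    induction n with
    | zero => simp [hA, Matrix.map_one]
    | succ n ih =>
      rw [pow_succ, pow_succ, ih, hA]
      ext i j
      simp [Matrix.mul_apply, Matrix.map_apply]
  -- entry bound:  (B^n) i j ≤ ‖A^n‖
  have hentry : ∀ n : ℕ, ∀ i j, (B ^ n) i j ≤ ‖A ^ n‖ := by
    intro n i j
    have h1 : (B ^ n) i j = (Φ ^ n) j i := by rw [hBdef, ← Matrix.transpose_pow, Matrix.transpose_apply]
    have h2 : ((Φ ^ n) j i : ℝ) ≤ ‖(A ^ n) j i‖ := by
      rw [hmap n]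
      simp only [Matrix.map_apply, Complex.norm_real]
      exact le_abs_self _
    rw [h1]
    exact h2.trans (entry_le_frob d _ j i)
  -- Gelfand's formula: get u ∈ (spectralRadius, 1) and N
  obtain ⟨u', hu'1, hu'2⟩ := exists_between hΦspec
  lift u' to ℝ≥0 using (hu'2.trans_le (le_top : (1:ℝ≥0∞) ≤ ⊤)).ne with u hu
  have hgel := spectrum.pow_nnnorm_pow_one_div_tendsto_nhds_spectralRadius A
  have hev : ∀ᶠ n : ℕ in atTop, (‖A ^ n‖₊ : ℝ≥0∞) ^ (1 / (n:ℝ)) < (u : ℝ≥0∞) :=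
    hgel.eventually_lt_const hu'1
  obtain ⟨N₀, hN₀⟩ := eventually_atTop.mp hev
  set N : ℕ := max N₀ 1 with hN
  -- for n ≥ N, ‖A^n‖ ≤ u^n
  have hpow : ∀ n ≥ N, ‖A ^ n‖ ≤ (u : ℝ) ^ n := by
    intro n hn
    have hn1 : 1 ≤ n := le_trans (le_max_right _ _) hn
    have h := hN₀ n (le_trans (le_max_left _ _) hn)
    have hnn : (‖A ^ n‖₊ : ℝ≥0) ^ ((1:ℝ) / n) < u := by
      rw [← ENNReal.coe_lt_coe, ENNReal.coe_rpow_of_nonneg _ (by positivity)]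
      exact h
    have : (‖A ^ n‖₊ : ℝ≥0) ≤ u ^ n := by
      have h2 := NNReal.rpow_le_rpow hnn.le (n.cast_nonneg : (0:ℝ) ≤ n)
      rwa [← NNReal.rpow_mul, one_div,
        inv_mul_cancel₀ (Nat.cast_ne_zero.mpr (by omega) : (n:ℝ) ≠ 0), NNReal.rpow_one,
        NNReal.rpow_natCast] at h2
    calc ‖A ^ n‖ = ((‖A ^ n‖₊ : ℝ≥0) : ℝ) := rfl
      _ ≤ ((u ^ n : ℝ≥0) : ℝ) := by exact_mod_cast this
      _ = (u : ℝ) ^ n := by push_cast; ring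
  -- choose s with max u (1/2) < s < 1
  have hu1 : (u : ℝ) < 1 := by exact_mod_cast hu'2
  obtain ⟨s, hs1, hs2⟩ := exists_between (max_lt hu1 (by norm_num : (1:ℝ)/2 < 1))
  have hspos : 0 < s := lt_trans (by norm_num) (lt_of_le_of_lt (le_max_right _ _) hs1)
  have hus : (u : ℝ) < s := lt_of_le_of_lt (le_max_left _ _) hs1
  -- column sums
  set c : ℕ → Fin d → ℝ := fun n i => ∑ j, (B ^ n) i j with hc
  have hcnonneg : ∀ n i, 0 ≤ c n i := fun n i => Finset.sum_nonneg fun j _ => hBn n i j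
  have hcle : ∀ n i, c n i ≤ d * ‖A ^ n‖ := by
    intro n i
    calc c n i ≤ ∑ _j : Fin d, ‖A ^ n‖ := Finset.sum_le_sum fun j _ => hentry n i j
      _ = d * ‖A ^ n‖ := by rw [Finset.sum_const, Finset.card_univ, Fintype.card_fin, nsmul_eq_mul]
  have hc0 : ∀ i, c 0 i = 1 := by
    intro i
    simp [hc, Matrix.one_apply]
  have hcrec : ∀ n i, ∑ j, B i j * c n j = c (n + 1) i := by
    intro n i
    simp only [hc]
    have hps : ∀ j, (B ^ (n+1)) i j = ∑ k, B i k * (B ^ n) k j := by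
      intro j; rw [pow_succ', Matrix.mul_apply]
    simp_rw [hps, Finset.mul_sum]
    rw [Finset.sum_comm]
  -- summability
  set f : Fin d → ℕ → ℝ := fun i n => s⁻¹ ^ n * c n i with hf
  have hfnonneg : ∀ i n, 0 ≤ f i n := fun i n =>
    mul_nonneg (pow_nonneg (inv_nonneg.mpr hspos.le) n) (hcnonneg n i)
  have hsum : ∀ i, Summable (f i) := by
    intro i
    rw [← summable_nat_add_iff N]
    have hratio : (u:ℝ)/s < 1 := (div_lt_one hspos).mpr hus
    have hrnn : 0 ≤ (u:ℝ)/s := div_nonneg u.coe_nonneg hspos.le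
    refine Summable.of_nonneg_of_le (f := fun n => (d:ℝ) * ((u:ℝ)/s) ^ n)
      (fun n => hfnonneg i (n + N)) (fun n => ?_)
      ((summable_geometric_of_lt_one hrnn hratio).mul_left _)
    have h1 : f i (n + N) ≤ s⁻¹ ^ (n + N) * (d * (u:ℝ) ^ (n + N)) := by
      apply mul_le_mul_of_nonneg_left _ (pow_nonneg (inv_nonneg.mpr hspos.le) _)
      exact (hcle _ i).trans (mul_le_mul_of_nonneg_left (hpow _ (Nat.le_add_left N n)) (Nat.cast_nonneg d))
    have h2 : s⁻¹ ^ (n + N) * (d * (u:ℝ) ^ (n + N)) = d * ((u:ℝ)/s) ^ (n + N) := by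
      rw [div_pow, div_eq_mul_inv, inv_pow]; ring
    have h3 : ((u:ℝ)/s) ^ (n + N) ≤ ((u:ℝ)/s) ^ n :=
      pow_le_pow_of_le_one hrnn hratio.le (Nat.le_add_right n N)
    calc f i (n + N) ≤ d * ((u:ℝ)/s) ^ (n + N) := h1.trans_eq h2
      _ ≤ d * ((u:ℝ)/s) ^ n := mul_le_mul_of_nonneg_left h3 (Nat.cast_nonneg d)
  set κ : Fin d → ℝ := fun i => ∑' n, f i n with hκ
  have hκge : ∀ i, 1 ≤ κ i := by
    intro i
    rw [hκ]
    simp only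
    rw [Summable.tsum_eq_zero_add (hsum i)]
    have : f i 0 = 1 := by simp [hf, hc0]
    rw [this]
    have hnn : (0:ℝ) ≤ ∑' n, f i (n+1) := tsum_nonneg fun n => hfnonneg i (n+1)
    nlinarith [hnn]
  refine ⟨κ, s, fun i => lt_of_lt_of_le one_pos (hκge i), hspos.le, hs2, fun i => ?_⟩
  -- main computation
  have hmv : Φᵀ.mulVec κ i = ∑ j, B i j * κ j := by
    simp [Matrix.mulVec, dotProduct, B, Matrix.transpose_apply]
  have hswap : ∑ j, B i j * κ j = ∑' n, s⁻¹ ^ n * c (n+1) i := by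
    rw [hκ]
    simp only
    have : ∀ j, B i j * ∑' n, f j n = ∑' n, B i j * f j n := fun j => (tsum_mul_left).symm
    simp_rw [this]
    rw [← Summable.tsum_finsetSum (fun j _ => (hsum j).mul_left _)]
    congr 1
    ext n
    rw [← hcrec n i, Finset.mul_sum]
    congr 1
    ext j
    rw [hf]; ring
  have hshift : ∑' n, s⁻¹ ^ n * c (n+1) i = s * (κ i - 1) := by
    have h1 : ∀ n : ℕ, s⁻¹ ^ n * c (n+1) i = s * f i (n+1) := by
      intro n
      rw [hf]
      simp only
      rw [pow_succ]
      field_simp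
    simp_rw [h1]
    rw [tsum_mul_left]
    congr 1
    have hf0 : f i 0 = 1 := by simp [hf, hc0]
    rw [hκ]
    simp only
    rw [Summable.tsum_eq_zero_add (hsum i), hf0]
    ring
  rw [hmv, hswap, hshift]
  nlinarith [hκge i, hspos]
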